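/- For γ > 1 and any real δ ∈ [0,1), if δ' is obtained by rounding δ down to the largest multiple of 1/q not exceeding δ (q a positive integer), then for any weight w > 0 the ratio of the rounded weight of w under δ over the rounded weight under δ' is at most γ^{1/q}. -/

import Mathlib

/-- Rounding the shift `δ` down to a multiple `δ' = ⌊qδ⌋/q` of `1/q` changes the
rounded weight of any `w > 0` by a multiplicative factor of at most `γ^{1/q}`. -/
theorem stmt_5 (γ : ℝ) (hγ : 1 < γ) (q : ℕ) (hq : 1 ≤ q) (δ : ℝ) (hδ0 : 0 ≤ δ) (hδ1 : δ < 1)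
    (δ' : ℝ) (hδ' : δ' = ⌊(q : ℝ) * δ⌋ / q)
    (w : ℝ) (hw : 0 < w) (i j : ℤ)
    (hi : γ ^ ((i : ℝ) + δ) ≤ w ∧ w < γ ^ ((i : ℝ) + 1 + δ))
    (hj : γ ^ ((j : ℝ) + δ') ≤ w ∧ w < γ ^ ((j : ℝ) + 1 + δ')) :
    γ ^ ((i : ℝ) + δ) / γ ^ ((j : ℝ) + δ') ≤ γ ^ ((1 : ℝ) / q) := by
  have hγ0 : (0 : ℝ) < γ := lt_trans one_pos hγ
  have hq0 : (0 : ℝ) < (q : ℝ) := by exact_mod_cast hq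
  have hδ'le : δ' ≤ δ := by
    rw [hδ', div_le_iff₀ hq0]
    have := Int.floor_le ((q : ℝ) * δ)
    linarith
  have hlt : δ - δ' < 1 / q := by
    rw [hδ', sub_lt_iff_lt_add, ← add_div, lt_div_iff₀ hq0]
    have := Int.lt_floor_add_one ((q : ℝ) * δ)
    linarith [mul_comm δ (q : ℝ)]
  -- from γ^(i+δ) ≤ w < γ^(j+1+δ')
  have hkey : (i : ℝ) + δ < (j : ℝ) + 1 + δ' :=
    (Real.rpow_lt_rpow_left_iff hγ).mp (lt_of_le_of_lt hi.1 hj.2)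
  have hij : i ≤ j := by
    have : (i : ℝ) < (j : ℝ) + 1 := by linarith
    have : i < j + 1 := by exact_mod_cast this
    omega
  have hexp : (i : ℝ) + δ - ((j : ℝ) + δ') ≤ 1 / q := by
    have : (i : ℝ) ≤ (j : ℝ) := by exact_mod_cast hij
    linarith
  rw [← Real.rpow_sub hγ0]
  exact (Real.rpow_le_rpow_left_iff hγ).mpr hexp
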